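/- For a positive integer n, x^(n+1) = x holds for every x in ℤ/nℤ if and only if n is squarefree and p − 1 divides n for every prime p dividing n. -/

import Mathlib

private lemma aux_prime_dvd (n p : ℕ) (hp : p.Prime) (hpn : (p - 1) ∣ n) (a : ℤ) :
    (p : ℤ) ∣ a ^ (n + 1) - a := by
  haveI : Fact p.Prime := ⟨hp⟩
  have h0 : ((a ^ (n + 1) - a : ℤ) : ZMod p) = 0 := by
    push_cast
    set b : ZMod p := (a : ZMod p) with hb
    by_cases hb0 : b = 0
    · simp [hb0]
    · have h1 : b ^ (p - 1) = 1 := ZMod.pow_card_sub_one_eq_one hb0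
      obtain ⟨k, hk⟩ := hpn
      have hbn : b ^ n = 1 := by rw [hk, pow_mul, h1, one_pow]
      rw [pow_succ, hbn, one_mul, sub_self]
  exact (ZMod.intCast_zmod_eq_zero_iff_dvd _ _).mp h0

/-- For a positive integer `n`, `x ^ (n + 1) = x` holds for every `x` in `ℤ/nℤ`
if and only if `n` is squarefree and `p - 1` divides `n` for every prime `p`
dividing `n`. -/
theorem zmod_pow_succ_eq_self_iff_squarefree (n : ℕ) (hn : 0 < n) :
    (∀ x : ZMod n, x ^ (n + 1) = x) ↔
      Squarefree n ∧ ∀ p : ℕ, p.Prime → p ∣ n → (p - 1) ∣ n := by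
  haveI : NeZero n := ⟨hn.ne'⟩
  constructor
  · intro h
    constructor
    · rw [Nat.squarefree_iff_prime_squarefree]
      rintro p hp ⟨k, hk⟩
      have hk0 : 0 < k := Nat.pos_of_ne_zero (by rintro rfl; simp at hk; omega)
      have hp1 : 1 < p := hp.one_lt
      set x : ZMod n := ((p * k : ℕ) : ZMod n) with hx
      have hx2 : x ^ 2 = 0 := by
        have e : (p * k) ^ 2 = n * k := by rw [hk]; ring
        rw [hx, ← Nat.cast_pow, e, Nat.cast_mul, ZMod.natCast_self, zero_mul]
      have hxs : x ^ (n + 1) = 0 := by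
        rw [show n + 1 = 2 + (n - 1) by omega, pow_add, hx2, zero_mul]
      have hx0 : x = 0 := by rw [← h x, hxs]
      have hnd : n ∣ p * k := (ZMod.natCast_eq_zero_iff _ _).mp hx0
      have hlt : p * k < n := by
        rw [hk]
        have : p * k < p * (p * k) :=
          (Nat.lt_mul_iff_one_lt_left (by positivity)).mpr hp1
        nlinarith
      have := Nat.le_of_dvd (by positivity) hnd
      omega
    · intro p hp hpd
      haveI : Fact p.Prime := ⟨hp⟩
      have hall : ∀ y : ZMod p, y ^ (n + 1) = y := by
        intro y
        have h1 := h ((y.val : ℕ) : ZMod n)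
        have hy : ((y.val : ℕ) : ZMod p) = y := ZMod.natCast_rightInverse y
        have h2 := congrArg (ZMod.castHom hpd (ZMod p)) h1
        rw [map_pow, map_natCast, hy] at h2
        exact h2
      obtain ⟨g, hg⟩ := IsCyclic.exists_generator (α := (ZMod p)ˣ)
      have hord : orderOf g = p - 1 := by
        rw [orderOf_eq_card_of_forall_mem_zpowers hg, Nat.card_eq_fintype_card, ZMod.card_units]
      have hg1 : g ^ n = 1 := by
        have hgs : g ^ (n + 1) = g := by
          ext
          push_cast
          exact hall g
        have : g ^ n * g = 1 * g := by rw [one_mul, ← pow_succ]; exact hgs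
        exact mul_right_cancel this
      rw [← hord]
      exact orderOf_dvd_of_pow_eq_one hg1
  · rintro ⟨hsf, hdvd⟩ x
    have key : (n : ℤ) ∣ (x.val : ℤ) ^ (n + 1) - (x.val : ℤ) := by
      rw [Int.natCast_dvd]
      have hpd : ∏ p ∈ n.primeFactors, p ∣ ((x.val : ℤ) ^ (n + 1) - (x.val : ℤ)).natAbs := by
        apply Finset.prod_primes_dvd
        · intro p hp
          exact (Nat.prime_of_mem_primeFactors hp).prime
        · intro p hp
          have hpp := Nat.prime_of_mem_primeFactors hp
          have := aux_prime_dvd n p hpp (hdvd p hpp (Nat.dvd_of_mem_primeFactors hp)) (x.val : ℤ)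
          rwa [Int.natCast_dvd] at this
      rwa [Nat.prod_primeFactors_of_squarefree hsf] at hpd
    have h0 : (((x.val : ℤ) ^ (n + 1) - (x.val : ℤ) : ℤ) : ZMod n) = 0 :=
      (ZMod.intCast_zmod_eq_zero_iff_dvd _ _).mpr key
    have hv : ((x.val : ℕ) : ZMod n) = x := ZMod.natCast_rightInverse x
    push_cast at h0
    rw [hv] at h0
    linear_combination h0
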